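/- Let T > 0, u, m, x₀ and q be as follows: u : [0,T] × ℝ → ℝ has continuous partial derivatives u_x, u_{xx}, u_t, u_{tx}, u_{txx}, u_{xxx}; m = u − u_{xx} satisfies m_t + sin(u² − u_x²)·m_x = −2·cos(u² − u_x²)·u_x·m²; q : [0,T] → ℝ is differentiable with q(0) = x₀ and q'(t) = sin(u(t,q(t))² − u_x(t,q(t))²). Suppose in addition there is K ≥ 0 such that cos(u(t,x)² − u_x(t,x)²)·u_x(t,x)·m(t,x) ≥ −K/2 for all (t,x) ∈ [0,T] × ℝ. Then |m(t, q(t))| ≤ e^{K·t}·|m(0, x₀)| for all t ∈ [0,T]. -/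

import Mathlib

open MeasureTheory Real Set

/-- The convolution `(p*f)(x) = ∫_ℝ (1/2) e^{-|x-y|} f(y) dy` with `p(x) = (1/2)exp(-|x|)`. -/
noncomputable def pConv (f : ℝ → ℝ) (x : ℝ) : ℝ := ∫ y : ℝ, (1/2) * Real.exp (-|x - y|) * f y

/-- `(p₊*f)(x) = (1/2)∫_{-∞}^{x} e^{y-x} f(y) dy`. -/
noncomputable def pPlus (f : ℝ → ℝ) (x : ℝ) : ℝ := (1/2) * ∫ y in Set.Iic x, Real.exp (y - x) * f y

/-- `(p₋*f)(x) = (1/2)∫_{x}^{∞} e^{x-y} f(y) dy`. -/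
noncomputable def pMinus (f : ℝ → ℝ) (x : ℝ) : ℝ := (1/2) * ∫ y in Set.Ici x, Real.exp (x - y) * f y

/-- Spatial partial derivative `∂ₓ` of a function of `(t, x)`. -/
noncomputable def pdx (f : ℝ → ℝ → ℝ) : ℝ → ℝ → ℝ := fun t x => deriv (fun y => f t y) x

/-- Time partial derivative `∂ₜ` of a function of `(t, x)`. -/
noncomputable def pdt (f : ℝ → ℝ → ℝ) : ℝ → ℝ → ℝ := fun t x => deriv (fun s => f s x) t

/-- The momentum density `m = u - u_{xx}`. -/
noncomputable def mF (u : ℝ → ℝ → ℝ) : ℝ → ℝ → ℝ := fun t x => u t x - pdx (pdx u) t x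

/-- The blow-up quantity `M = cos(u² - u_x²) · m · u_x`. -/
noncomputable def MF (u : ℝ → ℝ → ℝ) : ℝ → ℝ → ℝ :=
  fun t x => Real.cos ((u t x) ^ 2 - (pdx u t x) ^ 2) * mF u t x * pdx u t x


open Asymptotics Filter

lemma chainAux (f g : ℝ → ℝ → ℝ) (q : ℝ → ℝ) (t v a : ℝ)
    (hft : HasDerivAt (fun s => f s (q t)) a t)
    (hfx : ∀ s x, HasDerivAt (fun y => f s y) (g s x) x)
    (hg : Continuous (Function.uncurry g))
    (hq : HasDerivAt q v t) :
    HasDerivAt (fun s => f s (q s)) (a + g t (q t) * v) t := by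
  have hgc : ∀ s, Continuous (g s) := fun s => hg.comp (Continuous.prodMk_right s)
  have ftc : ∀ s, f s (q s) - f s (q t) = ∫ y in (q t)..(q s), g s y := by
    intro s
    rw [intervalIntegral.integral_eq_sub_of_hasDerivAt (fun y _ => hfx s y)
      ((hgc s).intervalIntegrable _ _)]
  set c := g t (q t) with hc
  have key : ∀ s, f s (q s) - f t (q t) - (s - t) • (a + c * v)
      = (f s (q t) - f t (q t) - (s - t) • a)
        + (∫ y in (q t)..(q s), (g s y - c))
        + c * (q s - q t - (s - t) • v) := by
    intro s
    have h1 : (∫ y in (q t)..(q s), (g s y - c))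
        = (f s (q s) - f s (q t)) - c * (q s - q t) := by
      rw [intervalIntegral.integral_sub ((hgc s).intervalIntegrable _ _)
        intervalIntegrable_const, intervalIntegral.integral_const, ← ftc s,
        smul_eq_mul, mul_comm]
    rw [h1]; simp only [smul_eq_mul]; ring
  rw [hasDerivAt_iff_isLittleO]
  have hA : (fun s => f s (q t) - f t (q t) - (s - t) • a) =o[nhds t] (fun s => s - t) :=
    hasDerivAt_iff_isLittleO.mp hft
  have hC : (fun s => c * (q s - q t - (s - t) • v)) =o[nhds t] (fun s => s - t) :=
    (hasDerivAt_iff_isLittleO.mp hq).const_mul_left c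
  have hB : (fun s => ∫ y in (q t)..(q s), (g s y - c)) =o[nhds t] (fun s => s - t) := by
    rw [isLittleO_iff]
    intro ε hε
    set C : ℝ := |v| + 1 with hCdef
    have hCpos : 0 < C := by positivity
    -- eventually |q s - q t| ≤ C * |s - t|
    have e1 : ∀ᶠ s in nhds t, |q s - q t| ≤ C * |s - t| := by
      have := (hasDerivAt_iff_isLittleO.mp hq).def one_pos
      filter_upwards [this] with s hs
      have : |q s - q t - (s - t) * v| ≤ |s - t| := by simpa [Real.norm_eq_abs] using hs
      have h2 : |(s - t) * v| = |s - t| * |v| := abs_mul _ _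
      calc |q s - q t| ≤ |q s - q t - (s - t) * v| + |(s - t) * v| := by
            have := abs_add_le (q s - q t - (s - t) * v) ((s - t) * v); simpa using this
        _ ≤ |s - t| + |s - t| * |v| := by rw [h2]; linarith
        _ = C * |s - t| := by rw [hCdef]; ring
    -- continuity of g at (t, q t)
    obtain ⟨δ, hδpos, hδ⟩ := Metric.continuousAt_iff.mp (hg.continuousAt
      (x := (t, q t))) (ε / C) (by positivity)
    have e2 : ∀ᶠ s in nhds t, dist s t < δ := by
      have : Metric.ball t δ ∈ nhds t := Metric.ball_mem_nhds t hδpos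
      filter_upwards [this] with s hs using hs
    have e3 : ∀ᶠ s in nhds t, |q s - q t| < δ := by
      have hqc : ContinuousAt q t := hq.continuousAt
      have := Metric.continuousAt_iff.mp hqc δ hδpos
      obtain ⟨δ', hδ'pos, hδ'⟩ := this
      have : Metric.ball t δ' ∈ nhds t := Metric.ball_mem_nhds t hδ'pos
      filter_upwards [this] with s hs
      have := hδ' (Metric.mem_ball.mp hs)
      simpa [Real.dist_eq] using this
    filter_upwards [e1, e2, e3] with s h1 h2 h3
    have hbd : ∀ y ∈ Set.uIoc (q t) (q s), ‖g s y - c‖ ≤ ε / C := by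
      intro y hy
      have hy' : |y - q t| ≤ |q s - q t| := by
        rcases Set.mem_uIoc.mp hy with ⟨h5, h6⟩ | ⟨h5, h6⟩
        · rw [abs_of_nonneg (by linarith), abs_of_nonneg (by linarith)]; linarith
        · rw [abs_of_nonpos (by linarith)]
          rw [abs_of_nonpos (by linarith)] <;> linarith
      have hdist : dist (s, y) (t, q t) < δ := by
        rw [Prod.dist_eq]
        apply max_lt h2
        rw [Real.dist_eq]; exact lt_of_le_of_lt hy' h3
      have := hδ hdist
      rw [Real.dist_eq] at this
      simpa [Real.norm_eq_abs] using this.le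
    calc ‖∫ y in (q t)..(q s), (g s y - c)‖ ≤ ε / C * |q s - q t| :=
          intervalIntegral.norm_integral_le_of_norm_le_const hbd
      _ ≤ ε / C * (C * |s - t|) := by
          apply mul_le_mul_of_nonneg_left h1 (by positivity)
      _ = ε * |s - t| := by field_simp
      _ = ε * ‖s - t‖ := by rw [Real.norm_eq_abs]
  have := (hA.add hB).add hC
  exact this.congr' (Filter.Eventually.of_forall fun s => (key s).symm) (by rfl)

theorem stmt13 (T : ℝ) (hT : 0 < T) (u : ℝ → ℝ → ℝ)
    -- existence of the partial derivatives u_x, u_xx, u_xxx, u_t, u_tx, u_txx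
    (hux : ∀ t : ℝ, Differentiable ℝ (fun y => u t y))
    (huxx : ∀ t : ℝ, Differentiable ℝ (fun y => pdx u t y))
    (huxxx : ∀ t : ℝ, Differentiable ℝ (fun y => pdx (pdx u) t y))
    (hut : ∀ x : ℝ, Differentiable ℝ (fun s => u s x))
    (hutx : ∀ x : ℝ, Differentiable ℝ (fun s => pdx u s x))
    (hutxx : ∀ x : ℝ, Differentiable ℝ (fun s => pdx (pdx u) s x))
    -- continuity of u and of these partial derivatives
    (hc : Continuous (Function.uncurry u))
    (hcx : Continuous (Function.uncurry (pdx u)))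
    (hcxx : Continuous (Function.uncurry (pdx (pdx u))))
    (hcxxx : Continuous (Function.uncurry (pdx (pdx (pdx u)))))
    (hct : Continuous (Function.uncurry (pdt u)))
    (hctx : Continuous (Function.uncurry (pdt (pdx u))))
    (hctxx : Continuous (Function.uncurry (pdt (pdx (pdx u)))))
    -- the sine-mCH equation: m_t + sin(u² - u_x²)·m_x = -2·cos(u² - u_x²)·u_x·m²
    (heq : ∀ t ∈ Set.Icc (0 : ℝ) T, ∀ x : ℝ,
      pdt (mF u) t x + Real.sin ((u t x) ^ 2 - (pdx u t x) ^ 2) * pdx (mF u) t x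
        = -2 * Real.cos ((u t x) ^ 2 - (pdx u t x) ^ 2) * pdx u t x * (mF u t x) ^ 2)
    (x₀ : ℝ) (q : ℝ → ℝ) (hq0 : q 0 = x₀)
    (hq : ∀ t ∈ Set.Icc (0 : ℝ) T,
      HasDerivAt q (Real.sin ((u t (q t)) ^ 2 - (pdx u t (q t)) ^ 2)) t)
    -- the lower bound  cos(u² - u_x²)·u_x·m ≥ -K/2
    (K : ℝ) (hK : 0 ≤ K)
    (hbound : ∀ t ∈ Set.Icc (0 : ℝ) T, ∀ x : ℝ,
      -(K / 2) ≤ Real.cos ((u t x) ^ 2 - (pdx u t x) ^ 2) * pdx u t x * mF u t x) :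
    ∀ t ∈ Set.Icc (0 : ℝ) T, |mF u t (q t)| ≤ Real.exp (K * t) * |mF u 0 x₀| := by
  set h : ℝ → ℝ := fun t => mF u t (q t) with hhdef
  -- pdx (mF u) is jointly continuous
  have hpdxm : Function.uncurry (pdx (mF u))
      = fun p : ℝ × ℝ => pdx u p.1 p.2 - pdx (pdx (pdx u)) p.1 p.2 := by
    funext p
    show deriv (fun y => u p.1 y - pdx (pdx u) p.1 y) p.2 = _
    rw [deriv_fun_sub ((hux p.1) p.2) ((huxxx p.1) p.2)]
    rfl
  have hgcont : Continuous (Function.uncurry (pdx (mF u))) := by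
    rw [hpdxm]
    exact (hcx.comp continuous_id).sub (hcxxx.comp continuous_id)
  -- derivative of h along the characteristic
  have hh : ∀ t ∈ Set.Icc (0 : ℝ) T,
      HasDerivAt h
        (-2 * (Real.cos ((u t (q t)) ^ 2 - (pdx u t (q t)) ^ 2) * pdx u t (q t)
          * mF u t (q t)) * h t) t := by
    intro t ht
    have hft : HasDerivAt (fun s => mF u s (q t)) (pdt (mF u) t (q t)) t := by
      have hd : DifferentiableAt ℝ (fun s => mF u s (q t)) t :=
        ((hut (q t)).sub (hutxx (q t))) t
      exact hd.hasDerivAt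
    have hfx : ∀ s x, HasDerivAt (fun y => mF u s y) (pdx (mF u) s x) x := by
      intro s x
      have hd : DifferentiableAt ℝ (fun y => mF u s y) x := ((hux s).sub (huxxx s)) x
      exact hd.hasDerivAt
    have H := chainAux (mF u) (pdx (mF u)) q t
      (Real.sin ((u t (q t)) ^ 2 - (pdx u t (q t)) ^ 2)) (pdt (mF u) t (q t))
      hft hfx hgcont (hq t ht)
    have hval : pdt (mF u) t (q t)
        + pdx (mF u) t (q t) * Real.sin ((u t (q t)) ^ 2 - (pdx u t (q t)) ^ 2)
        = -2 * (Real.cos ((u t (q t)) ^ 2 - (pdx u t (q t)) ^ 2) * pdx u t (q t)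
          * mF u t (q t)) * h t := by
      have := heq t ht (q t)
      simp only [hhdef]
      nlinarith [this]
    rwa [hval] at H
  -- the Lyapunov function
  set G : ℝ → ℝ := fun t => (h t) ^ 2 * Real.exp (-(2 * K) * t) with hGdef
  have hG : ∀ t ∈ Set.Icc (0 : ℝ) T,
      HasDerivAt G
        ((2 * h t * (-2 * (Real.cos ((u t (q t)) ^ 2 - (pdx u t (q t)) ^ 2) * pdx u t (q t)
          * mF u t (q t)) * h t)) * Real.exp (-(2 * K) * t)
          + (h t) ^ 2 * (Real.exp (-(2 * K) * t) * (-(2 * K)))) t := by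
    intro t ht
    have h1 : HasDerivAt (fun s => (h s) ^ 2)
        (2 * h t * (-2 * (Real.cos ((u t (q t)) ^ 2 - (pdx u t (q t)) ^ 2) * pdx u t (q t)
          * mF u t (q t)) * h t)) t := by
      have : HasDerivAt (fun s => (h s) ^ 2) _ t := (hh t ht).pow 2
      simpa [mul_comm, mul_assoc, mul_left_comm] using this
    have h2 : HasDerivAt (fun s : ℝ => Real.exp (-(2 * K) * s))
        (Real.exp (-(2 * K) * t) * (-(2 * K))) t := by
      have hl : HasDerivAt (fun s : ℝ => -(2 * K) * s) (-(2 * K)) t := by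
        simpa using (hasDerivAt_id t).const_mul (-(2 * K))
      exact (Real.hasDerivAt_exp _).comp t hl
    exact h1.mul h2
  have hGderiv_nonpos : ∀ t ∈ Set.Icc (0 : ℝ) T,
      (2 * h t * (-2 * (Real.cos ((u t (q t)) ^ 2 - (pdx u t (q t)) ^ 2) * pdx u t (q t)
          * mF u t (q t)) * h t)) * Real.exp (-(2 * K) * t)
          + (h t) ^ 2 * (Real.exp (-(2 * K) * t) * (-(2 * K))) ≤ 0 := by
    intro t ht
    set c := Real.cos ((u t (q t)) ^ 2 - (pdx u t (q t)) ^ 2) * pdx u t (q t) * mF u t (q t)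
      with hcdef
    have hcb : -(K / 2) ≤ c := hbound t ht (q t)
    have hm : h t = mF u t (q t) := rfl
    have hE : (0 : ℝ) < Real.exp (-(2 * K) * t) := Real.exp_pos _
    have hexpr : (2 * h t * (-2 * c * h t)) * Real.exp (-(2 * K) * t)
        + (h t) ^ 2 * (Real.exp (-(2 * K) * t) * (-(2 * K)))
        = (-4 * c - 2 * K) * ((h t) ^ 2 * Real.exp (-(2 * K) * t)) := by ring
    rw [hm] at hexpr ⊢
    rw [hexpr]
    apply mul_nonpos_of_nonpos_of_nonneg
    · linarith
    · positivity
  -- G is antitone on [0, T]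
  have hanti : AntitoneOn G (Set.Icc 0 T) := by
    apply antitoneOn_of_deriv_nonpos (convex_Icc 0 T)
    · exact fun x hx => (hG x hx).continuousAt.continuousWithinAt
    · intro x hx
      rw [interior_Icc] at hx
      exact (hG x ⟨hx.1.le, hx.2.le⟩).differentiableAt.differentiableWithinAt
    · intro x hx
      rw [interior_Icc] at hx
      have hx' : x ∈ Set.Icc (0 : ℝ) T := ⟨hx.1.le, hx.2.le⟩
      rw [(hG x hx').deriv]
      exact hGderiv_nonpos x hx'
  intro t ht
  have h0T : (0 : ℝ) ∈ Set.Icc (0 : ℝ) T := ⟨le_refl 0, hT.le⟩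
  have hGle : G t ≤ G 0 := hanti h0T ht ht.1
  have hG0 : G 0 = (mF u 0 x₀) ^ 2 := by
    simp [hGdef, hhdef, hq0]
  have hGt : G t = (h t) ^ 2 * Real.exp (-(2 * K) * t) := rfl
  have hsq : (h t) ^ 2 ≤ (Real.exp (K * t) * |mF u 0 x₀|) ^ 2 := by
    have hE : (0 : ℝ) < Real.exp (-(2 * K) * t) := Real.exp_pos _
    have h1 : (h t) ^ 2 * Real.exp (-(2 * K) * t) ≤ (mF u 0 x₀) ^ 2 := by
      rw [← hGt, ← hG0]; exact hGle
    have h2 : (Real.exp (K * t) * |mF u 0 x₀|) ^ 2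
        = (mF u 0 x₀) ^ 2 * (Real.exp (-(2 * K) * t))⁻¹ := by
      rw [mul_pow, sq_abs, ← Real.exp_neg]
      rw [← Real.exp_nat_mul]
      ring_nf
    rw [h2]
    calc (h t) ^ 2 = (h t) ^ 2 * Real.exp (-(2 * K) * t) * (Real.exp (-(2 * K) * t))⁻¹ := by
            field_simp
      _ ≤ (mF u 0 x₀) ^ 2 * (Real.exp (-(2 * K) * t))⁻¹ := by
            apply mul_le_mul_of_nonneg_right h1 (by positivity)
  have habs : |h t| ≤ Real.exp (K * t) * |mF u 0 x₀| := by
    have h3 : |h t| ^ 2 ≤ (Real.exp (K * t) * |mF u 0 x₀|) ^ 2 := by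
      rw [sq_abs]; exact hsq
    exact le_of_pow_le_pow_left₀ two_ne_zero (by positivity) h3
  exact habs
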